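/- Set λ1 = (h1+h2−l1−l2−α1−α2−β+2)/2 and λ2 = (h1+h2−l1−l2−α1−α2+β+2)/2. Let λ ∈ {λ1, λ2} and α ∈ {α1, α2}, and assume λ = −α. Then the function x ↦ x^{λ} on (0,∞) is an eigenfunction of A⁴: for all x > 0, (A⁴ (·^{λ}))(x) = ( −(q^{h1+1/2}t1 + q^{h2+1/2}t2) q^{α} − (q^{l1−1/2}t1 + q^{l2−1/2}t2) q^{α1+α2−α} ) · x^{λ}. -/
import Mathlib

noncomputable def qp (q r : ℝ) : ℂ := ((q ^ r : ℝ) : ℂ)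

noncomputable def A4 (q h1 h2 l1 l2 a1 a2 b : ℝ) (t1 t2 : ℂ) (g : ℝ → ℂ) (x : ℝ) : ℂ :=
  (x : ℂ)⁻¹ * ((x : ℂ) - qp q (h1 + 1/2) * t1) * ((x : ℂ) - qp q (h2 + 1/2) * t2) * g (x / q)
    + qp q (a1 + a2) * (x : ℂ)⁻¹ * ((x : ℂ) - qp q (l1 - 1/2) * t1) * ((x : ℂ) - qp q (l2 - 1/2) * t2) * g (q * x)
    - ((qp q a1 + qp q a2) * (x : ℂ)
        + qp q ((h1 + h2 + l1 + l2 + a1 + a2) / 2) * (qp q (b / 2) + qp q (-b / 2)) * t1 * t2 * (x : ℂ)⁻¹) * g x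

lemma qp_add {q : ℝ} (hq : 0 < q) (r s : ℝ) : qp q (r + s) = qp q r * qp q s := by
  simp [qp, Real.rpow_add hq]

lemma qp_congr (q : ℝ) {r s : ℝ} (h : r = s) : qp q r = qp q s := by rw [h]

theorem stmt14 (q h1 h2 l1 l2 a1 a2 β : ℝ) (hq : 0 < q) (hq1 : q ≠ 1)
    (t1 t2 : ℂ) (ht1 : t1 ≠ 0) (ht2 : t2 ≠ 0)
    (lam α : ℝ)
    (hlam : lam = (h1 + h2 - l1 - l2 - a1 - a2 - β + 2) / 2 ∨
      lam = (h1 + h2 - l1 - l2 - a1 - a2 + β + 2) / 2)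
    (hα : α = a1 ∨ α = a2) (hla : lam = -α) :
    ∀ x : ℝ, 0 < x →
      A4 q h1 h2 l1 l2 a1 a2 β t1 t2 (fun y : ℝ => ((y ^ lam : ℝ) : ℂ)) x
        = (-(qp q (h1 + 1/2) * t1 + qp q (h2 + 1/2) * t2) * qp q α
            - (qp q (l1 - 1/2) * t1 + qp q (l2 - 1/2) * t2) * qp q (a1 + a2 - α))
          * ((x ^ lam : ℝ) : ℂ) := by
  intro x hx
  have hx0 : (x : ℂ) ≠ 0 := by exact_mod_cast ne_of_gt hx
  have F3 : qp q (a1 + a2) * qp q (-α) = qp q (a1 + a2 - α) := by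
    rw [← qp_add hq]; exact qp_congr q (by ring)
  have F1 : qp q α + qp q (a1 + a2) * qp q (-α) = qp q a1 + qp q a2 := by
    rw [F3]
    rcases hα with h | h <;> rw [h]
    · rw [qp_congr q (show a1 + a2 - a1 = a2 by ring)]
    · rw [qp_congr q (show a1 + a2 - a2 = a1 by ring)]; ring
  have F2 : qp q (h1 + 1/2) * qp q (h2 + 1/2) * qp q α
      + qp q (a1 + a2) * qp q (-α) * qp q (l1 - 1/2) * qp q (l2 - 1/2)
      = qp q ((h1 + h2 + l1 + l2 + a1 + a2) / 2) * (qp q (β / 2) + qp q (-β / 2)) := by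
    rw [mul_add]
    simp only [← qp_add hq]
    rcases hlam with h | h
    · rw [qp_congr q (show h1 + 1/2 + (h2 + 1/2) + α
            = (h1 + h2 + l1 + l2 + a1 + a2) / 2 + β / 2 by linarith),
        qp_congr q (show a1 + a2 + -α + (l1 - 1/2) + (l2 - 1/2)
            = (h1 + h2 + l1 + l2 + a1 + a2) / 2 + -β / 2 by linarith)]
    · rw [qp_congr q (show h1 + 1/2 + (h2 + 1/2) + α
            = (h1 + h2 + l1 + l2 + a1 + a2) / 2 + -β / 2 by linarith),
        qp_congr q (show a1 + a2 + -α + (l1 - 1/2) + (l2 - 1/2)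
            = (h1 + h2 + l1 + l2 + a1 + a2) / 2 + β / 2 by linarith)]
      ring
  subst hla
  have e1 : ((x / q) ^ (-α) : ℝ) = x ^ (-α) * q ^ α := by
    rw [Real.div_rpow hx.le hq.le, Real.rpow_neg hq.le α]
    field_simp
  have e2 : ((q * x) ^ (-α) : ℝ) = q ^ (-α) * x ^ (-α) := Real.mul_rpow hq.le hx.le
  show A4 _ _ _ _ _ _ _ _ _ _ _ _ = _
  unfold A4
  simp only []
  rw [e1, e2]
  push_cast
  rw [show ((q ^ α : ℝ) : ℂ) = qp q α from rfl,
    show ((q ^ (-α) : ℝ) : ℂ) = qp q (-α) from rfl]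
  have hY : (x : ℂ) * (x : ℂ)⁻¹ = 1 := mul_inv_cancel₀ hx0
  linear_combination
    (((x ^ (-α) : ℝ) : ℂ) * (x : ℂ) ^ 2 * (x : ℂ)⁻¹) * F1
    + (((x ^ (-α) : ℝ) : ℂ) * t1 * t2 * (x : ℂ)⁻¹) * F2
    + (-(((x ^ (-α) : ℝ) : ℂ) * (x : ℂ) * (x : ℂ)⁻¹
        * (qp q (l1 - 1/2) * t1 + qp q (l2 - 1/2) * t2))) * F3
    + (((x ^ (-α) : ℝ) : ℂ) * ((qp q a1 + qp q a2) * (x : ℂ)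
        - (qp q (h1 + 1/2) * t1 + qp q (h2 + 1/2) * t2) * qp q α
        - (qp q (l1 - 1/2) * t1 + qp q (l2 - 1/2) * t2) * qp q (a1 + a2 - α))) * hY
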